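/- arXiv:2010.09580 — 4 statements merged into one kernel-verified Lean document; each statement's English description precedes it below -/
import Mathlib

section
/- Let P ⊆ ℍ^d be a finite set, let I ⊆ [d], and let x ∈ ℍ^d with I ⊆ Dom(x). Then f^I_2(P, x) ≤ f^I_2(P, c(P)) + |PD(P, I)|·d(x, c(P))². -/
open Finset

namespace KMD

/-- A point in `ℍ^d`: each coordinate is either a real number or missing (`none`). -/
abbrev HPt (d : ℕ) := Fin d → Option ℝ

variable {d : ℕ}

/-- The domain of a point: the set of coordinates where it is specified. -/
noncomputable def Dom (x : HPt d) : Finset (Fin d) := Finset.univ.filter fun i => x i ≠ none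

/-- The number of missing coordinates of a point. -/
noncomputable def numMissing (x : HPt d) : ℕ := (Finset.univ.filter fun i => x i = none).card

/-- A `Δ`-point: at most `Δ` coordinates are missing. -/
def IsDeltaPt (Δ : ℕ) (x : HPt d) : Prop := numMissing x ≤ Δ

/-- `(a - b)^2`, with the convention that it is `0` when either entry is missing. -/
def coordSq : Option ℝ → Option ℝ → ℝ
  | some a, some b => (a - b) ^ 2
  | _, _ => 0

/-- `d^I(x,y)`. -/
noncomputable def dI (I : Finset (Fin d)) (x y : HPt d) : ℝ :=
  Real.sqrt (∑ i ∈ I, coordSq (x i) (y i))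

/-- `d(x,y) = d^{[d]}(x,y)`. -/
noncomputable def dH (x y : HPt d) : ℝ := dI Finset.univ x y

/-- `PD(S, I)`: points of `S` partially defined on `I`. -/
noncomputable def PD (S : Finset (HPt d)) (I : Finset (Fin d)) : Finset (HPt d) :=
  S.filter fun x => (Dom x ∩ I).Nonempty

/-- `FD(S, I)`: points of `S` fully defined on `I`. -/
noncomputable def FD (S : Finset (HPt d)) (I : Finset (Fin d)) : Finset (HPt d) :=
  S.filter fun x => Dom x ⊆ I

/-- The mean `c^I(P)` of `P` on the coordinates of `I` (unspecified outside `I`). -/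
noncomputable def cI (I : Finset (Fin d)) (P : Finset (HPt d)) : HPt d := fun i =>
  if i ∈ I ∧ (PD P {i}).Nonempty then
    some ((∑ x ∈ PD P {i}, (x i).getD 0) / (PD P {i}).card)
  else none

/-- `c(P) = c^{[d]}(P)`. -/
noncomputable def cP (P : Finset (HPt d)) : HPt d := cI Finset.univ P

/-- `f^I_2(X, y) = Σ_{x ∈ X} d^I(x,y)^2`. -/
noncomputable def f2I (I : Finset (Fin d)) (X : Finset (HPt d)) (y : HPt d) : ℝ :=
  ∑ x ∈ X, dI I x y ^ 2

/-- `f_2 = f^{[d]}_2`. -/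
noncomputable def f2 (X : Finset (HPt d)) (y : HPt d) : ℝ := f2I Finset.univ X y

/-- A partial clustering of the instance `P` of `Δ`-points, with `k` clusters. -/
structure PartialClustering (d Δ k : ℕ) (P : Finset (HPt d)) where
  n : Fin k → ℕ
  H : Fin k → Finset (HPt d)
  I : Fin k → Finset (Fin d)
  u : Fin k → HPt d
  H_sub : ∀ i, H i ⊆ P
  n_le : ∀ i, n i ≤ Δ + 1
  dom_u : ∀ i, Dom (u i) = I i
  I_card : ∀ i, 0 < n i → d - Δ + (n i - 1) ≤ (I i).card
  I_empty : ∀ i, n i = 0 → I i = ∅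
  H_empty : ∀ i, n i = 0 → H i = ∅

variable {Δ k : ℕ} {P : Finset (HPt d)}

/-- `R = P − ∪_i H_i`: the points not yet assigned to a cluster. -/
noncomputable def Rset (pc : PartialClustering d Δ k P) : Finset (HPt d) :=
  P \ Finset.univ.biUnion pc.H

/-- An extension of a partial clustering: a partition `(Q i)` of `P` with `H i ⊆ Q i`. -/
def IsExtension (pc : PartialClustering d Δ k P) (Q : Fin k → Finset (HPt d)) : Prop :=
  (∀ i, pc.H i ⊆ Q i) ∧ (∀ i, Q i ⊆ P) ∧
    (∀ i j, i ≠ j → Disjoint (Q i) (Q j)) ∧ ∀ x ∈ P, ∃ i, x ∈ Q i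

/-- The centers associated with an extension: `c'_i` agrees with `u i` on `I i`
and with the mean of `Q i` outside `I i`. -/
noncomputable def centers (pc : PartialClustering d Δ k P)
    (Q : Fin k → Finset (HPt d)) (i : Fin k) : HPt d :=
  fun r => if r ∈ pc.I i then pc.u i r else cP (Q i) r

/-- The value of an extension. -/
noncomputable def extVal (pc : PartialClustering d Δ k P)
    (Q : Fin k → Finset (HPt d)) : ℝ :=
  ∑ i, f2 (Q i) (centers pc Q i)

/-- `OPT(pc)`: the minimum value over all extensions of `pc`. -/
noncomputable def OPT (pc : PartialClustering d Δ k P) : ℝ :=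
  sInf (extVal pc '' {Q | IsExtension pc Q})

/-- An optimal extension. -/
def IsOptimalExtension (pc : PartialClustering d Δ k P)
    (Q : Fin k → Finset (HPt d)) : Prop :=
  IsExtension pc Q ∧ ∀ Q', IsExtension pc Q' → extVal pc Q ≤ extVal pc Q'

/-- A safe extension. -/
def IsSafe (pc : PartialClustering d Δ k P) (Q : Fin k → Finset (HPt d)) : Prop :=
  ∀ x ∈ Rset pc, ∀ i j : Fin k, Dom x ⊆ pc.I i → Dom x ⊆ pc.I j → x ∈ Q i →
    dH x (centers pc Q i) ≤ dH x (centers pc Q j)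

/-- `Z` is a `t`-useless set of coordinates for the pair `(i,j)` and extension `Q`.
For pairs with `I i = ∅` or `I j ≠ ∅` it is by definition the empty set. -/
def IsUseless (pc : PartialClustering d Δ k P) (Q : Fin k → Finset (HPt d))
    (t : ℝ) (i j : Fin k) (Z : Finset (Fin d)) : Prop :=
  Z ⊆ pc.I i ∧
  (((pc.I i).Nonempty ∧ pc.I j = ∅) →
    (Z = ∅ ∨ d - Δ ≤ Z.card) ∧
    f2I Z (Q j ∩ Rset pc) (pc.u i) - f2I Z (Q j ∩ Rset pc) (centers pc Q j)
      ≤ t * OPT pc) ∧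
  (¬ ((pc.I i).Nonempty ∧ pc.I j = ∅) → Z = ∅)

/-- `Z` is compatible with the extension `Q` (for the pair `(i,j)`). -/
def Compatible (pc : PartialClustering d Δ k P) (Q : Fin k → Finset (HPt d))
    (i j : Fin k) (Z : Finset (Fin d)) : Prop :=
  (∀ x ∈ Q j, ¬ Dom x ⊆ pc.I j → ¬ Dom x ⊆ Z) ∧
  (∀ x ∈ Q j, Dom x ⊆ pc.I i → ¬ dH x (pc.u i) < dH x (centers pc Q j) / 2)

open scoped Classical in
/-- The elements of `FD(S, I)` at distance at most `ρ` from `u`. -/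
noncomputable def ballFD (S : Finset (HPt d)) (I : Finset (Fin d))
    (u : HPt d) (ρ : ℝ) : Finset (HPt d) :=
  (FD S I).filter fun x => dH x u ≤ ρ


lemma coordSq_nonneg (a b : Option ℝ) : 0 ≤ coordSq a b := by
  cases a <;> cases b <;> simp [coordSq] <;> positivity

lemma dI_sq {d : ℕ} (I : Finset (Fin d)) (x y : HPt d) :
    dI I x y ^ 2 = ∑ i ∈ I, coordSq (x i) (y i) :=
  Real.sq_sqrt (Finset.sum_nonneg fun i _ => coordSq_nonneg _ _)

lemma mem_PD_singleton {d : ℕ} {P : Finset (HPt d)} {p : HPt d} {i : Fin d} :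
    p ∈ PD P {i} ↔ p ∈ P ∧ p i ≠ none := by
  simp [PD, Dom, Finset.Nonempty, Finset.mem_filter, Finset.mem_inter]

lemma sum_sq_mean {d : ℕ} (T : Finset (HPt d)) (v : HPt d → ℝ) (a : ℝ)
    (hT : T.Nonempty) :
    ∑ p ∈ T, (v p - a) ^ 2 =
      ∑ p ∈ T, (v p - (∑ q ∈ T, v q) / T.card) ^ 2
        + T.card * (a - (∑ q ∈ T, v q) / T.card) ^ 2 := by
  have hn : (T.card : ℝ) ≠ 0 := by
    exact_mod_cast (Finset.card_pos.mpr hT).ne'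
  set μ : ℝ := (∑ q ∈ T, v q) / T.card with hμ
  have hsum : ∑ q ∈ T, v q = T.card * μ := by
    rw [hμ, mul_div_assoc', mul_div_cancel_left₀ _ hn]
  have h0 : ∑ p ∈ T, (2 * (μ - a) * (v p - μ)) = 0 := by
    rw [← Finset.mul_sum, Finset.sum_sub_distrib, Finset.sum_const,
      nsmul_eq_mul, hsum]
    ring
  have hrw : ∑ p ∈ T, (v p - a) ^ 2 =
      ∑ p ∈ T, ((v p - μ) ^ 2 + (a - μ) ^ 2 + 2 * (μ - a) * (v p - μ)) :=
    Finset.sum_congr rfl (fun p _ => by ring)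
  rw [hrw, Finset.sum_add_distrib, Finset.sum_add_distrib, h0, add_zero,
    Finset.sum_const, nsmul_eq_mul]

/-- Lemma 1, inequality part. -/
theorem stmt_1 {d Δ : ℕ} (hd : 1 ≤ d) (hΔ : Δ < d)
    (P : Finset (HPt d)) (I : Finset (Fin d)) (x : HPt d) (hx : I ⊆ Dom x) :
    f2I I P x ≤ f2I I P (cP P) + ((PD P I).card : ℝ) * dH x (cP P) ^ 2 := by
  set N : ℝ := ((PD P I).card : ℝ) with hN
  have hNnn : 0 ≤ N := Nat.cast_nonneg _
  -- rewrite both f2I as double sums, swapped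
  have hf2 : ∀ y : HPt d, f2I I P y = ∑ i ∈ I, ∑ p ∈ P, coordSq (p i) (y i) := by
    intro y
    rw [f2I, Finset.sum_comm]
    exact Finset.sum_congr rfl fun p _ => dI_sq I p y
  rw [hf2, hf2]
  -- bound dH x (cP P) ^ 2 from below by the sum over I
  have hdH : ∑ i ∈ I, coordSq (x i) (cP P i) ≤ dH x (cP P) ^ 2 := by
    rw [dH, dI_sq]
    exact Finset.sum_le_sum_of_subset_of_nonneg (Finset.subset_univ I)
      (fun i _ _ => coordSq_nonneg _ _)
  have hmain : ∑ i ∈ I, ∑ p ∈ P, coordSq (p i) (x i) ≤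
      ∑ i ∈ I, (∑ p ∈ P, coordSq (p i) (cP P i) + N * coordSq (x i) (cP P i)) := by
    apply Finset.sum_le_sum
    intro i hi
    set T : Finset (HPt d) := PD P {i} with hT
    have hTP : T ⊆ P := Finset.filter_subset _ _
    have hTsub : T ⊆ PD P I := by
      intro p hp
      rw [mem_PD_singleton] at hp
      refine Finset.mem_filter.mpr ⟨hp.1, ⟨i, Finset.mem_inter.mpr ⟨?_, hi⟩⟩⟩
      simp [Dom, hp.2]
    have hcardT : (T.card : ℝ) ≤ N := by rw [hN]; exact_mod_cast Finset.card_le_card hTsub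
    -- sums over P reduce to sums over T
    have hred : ∀ z : Option ℝ, ∑ p ∈ P, coordSq (p i) z = ∑ p ∈ T, coordSq (p i) z := by
      intro z
      rw [← Finset.sum_subset hTP]
      intro p hp hpT
      have : p i = none := by
        by_contra h
        exact hpT (mem_PD_singleton.mpr ⟨hp, h⟩)
      simp [this, coordSq]
    rw [hred, hred]
    by_cases hTne : T.Nonempty
    · -- x i is defined
      have hxi : x i ≠ none := by
        have := hx hi
        simpa [Dom] using this
      obtain ⟨a, ha⟩ := Option.ne_none_iff_exists'.mp hxi
      -- cP P i is the mean
      have hc : cP P i = some ((∑ p ∈ T, (p i).getD 0) / T.card) := by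
        simp [cP, cI, ← hT, hTne]
      have hv : ∀ z : ℝ, ∑ p ∈ T, coordSq (p i) (some z)
          = ∑ p ∈ T, ((p i).getD 0 - z) ^ 2 := by
        intro z
        refine Finset.sum_congr rfl fun p hp => ?_
        obtain ⟨b, hb⟩ := Option.ne_none_iff_exists'.mp (mem_PD_singleton.mp hp).2
        simp [hb, coordSq]
      rw [ha, hc, hv, hv]
      have hkey := sum_sq_mean T (fun p => (p i).getD 0) a hTne
      have hcsq : coordSq (some a)
          (some ((∑ q ∈ T, (q i).getD 0) / T.card))
          = (a - (∑ q ∈ T, (q i).getD 0) / T.card) ^ 2 := by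
        simp [coordSq]
      rw [hcsq, hkey]
      have := mul_le_mul_of_nonneg_right hcardT
        (sq_nonneg (a - (∑ q ∈ T, (q i).getD 0) / T.card))
      linarith
    · -- T empty: LHS is 0
      rw [Finset.not_nonempty_iff_eq_empty] at hTne
      rw [hTne]
      simp only [Finset.sum_empty]
      have := coordSq_nonneg (x i) (cP P i)
      nlinarith
  calc ∑ i ∈ I, ∑ p ∈ P, coordSq (p i) (x i)
      ≤ ∑ i ∈ I, (∑ p ∈ P, coordSq (p i) (cP P i) + N * coordSq (x i) (cP P i)) := hmain
    _ = ∑ i ∈ I, ∑ p ∈ P, coordSq (p i) (cP P i) + N * ∑ i ∈ I, coordSq (x i) (cP P i) := by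
        rw [Finset.sum_add_distrib, Finset.mul_sum]
    _ ≤ ∑ i ∈ I, ∑ p ∈ P, coordSq (p i) (cP P i) + N * dH x (cP P) ^ 2 := by
        have := mul_le_mul_of_nonneg_left hdH hNnn
        linarith

end KMD
end

section
/- Let 𝒫 = {(n_i), (H_i), (I_i), (u_i)}_{i∈[k]} be a partial clustering such that no point x ∈ R satisfies Dom(x) ⊆ I_i for every i ∈ [k]. If Σ_{i∈[k]} n_i = k(Δ+1), then ∪_{i∈[k]} H_i = P. -/
open Finset

namespace KMD

variable {d : ℕ}

variable {Δ k : ℕ} {P : Finset (HPt d)}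

/-- Observation 2: if `Σ n_i = k(Δ+1)` then all points are assigned. -/
theorem stmt_4 {d Δ k : ℕ} (hd : 1 ≤ d) (hΔ : Δ < d) (hk : 1 ≤ k)
    {P : Finset (HPt d)} (hP : ∀ y ∈ P, IsDeltaPt Δ y ∧ (Dom y).Nonempty)
    (pc : PartialClustering d Δ k P)
    (hnone : ∀ x ∈ Rset pc, ¬ ∀ i : Fin k, Dom x ⊆ pc.I i)
    (hsum : ∑ i, pc.n i = k * (Δ + 1)) :
    Finset.univ.biUnion pc.H = P := by
  -- each n i = Δ + 1
  have hn : ∀ i : Fin k, pc.n i = Δ + 1 := by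
    intro i
    by_contra h
    have hlt : pc.n i < Δ + 1 := lt_of_le_of_ne (pc.n_le i) h
    have h2 : ∑ j, pc.n j < k * (Δ + 1) := by
      calc ∑ j, pc.n j < ∑ _j : Fin k, (Δ + 1) :=
            Finset.sum_lt_sum (fun j _ => pc.n_le j) ⟨i, Finset.mem_univ i, hlt⟩
        _ = k * (Δ + 1) := by simp [Finset.sum_const, Finset.card_univ, mul_comm]
    omega
  have hIuniv : ∀ i : Fin k, pc.I i = Finset.univ := by
    intro i
    have hpos : 0 < pc.n i := by rw [hn i]; omega
    have hc := pc.I_card i hpos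
    rw [hn i] at hc
    have hd' : d ≤ (pc.I i).card := by omega
    apply Finset.eq_univ_of_card
    have := Finset.card_le_univ (pc.I i)
    simp only [Finset.card_univ, Fintype.card_fin] at *
    omega
  have hRempty : Rset pc = ∅ := by
    rw [Finset.eq_empty_iff_forall_notMem]
    intro x hx
    exact hnone x hx (fun i => by rw [hIuniv i]; exact Finset.subset_univ _)
  apply Finset.Subset.antisymm
  · intro x hx
    rcases Finset.mem_biUnion.mp hx with ⟨i, _, hxi⟩
    exact pc.H_sub i hxi
  · intro x hx
    by_contra h
    have : x ∈ Rset pc := Finset.mem_sdiff.mpr ⟨hx, h⟩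
    rw [hRempty] at this
    exact absurd this (Finset.notMem_empty x)


end KMD
end

section
/- Let 𝒫 be a partial clustering, let (P'_i)_{i∈[k]} be an extension of 𝒫 with associated centers (c'_i), and fix i, j ∈ [k] with |I_i| ≥ Δ + 1 and I_j = ∅ (so that c'_j = c(P'_j)). Let Z_{i,j} ⊆ I_i with Z_{i,j} ≠ I_i be compatible with (P'_i). Let i_{j,min} ∈ I_i − Z_{i,j} minimize d^{e}(u_i, c'_j) over e ∈ I_i − Z_{i,j}, let r_1,…,r_Δ be Δ coordinates of I_i − {i_{j,min}} achieving the Δ largest values of d^{e}(u_i, c'_j) over e ∈ I_i − {i_{j,min}}, set I_{i,j} = I_i − {r_1,…,r_Δ}, and set d^j = d^{I_{i,j}}(u_i, c'_j). If d^j > 0, then every x ∈ P'_j with Dom(x) ⊆ I_i satisfies d(x, u_i) > d^j/4. -/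
open Finset

namespace KMD

variable {d : ℕ}

variable {Δ k : ℕ} {P : Finset (HPt d)}

lemma coordSq_comm (a b : Option ℝ) : coordSq a b = coordSq b a := by
  cases a <;> cases b <;> simp [coordSq] <;> ring

lemma dI_mono {I J : Finset (Fin d)} (h : I ⊆ J) (x y : HPt d) :
    dI I x y ≤ dI J x y :=
  Real.sqrt_le_sqrt (Finset.sum_le_sum_of_subset_of_nonneg h
    fun e _ _ => coordSq_nonneg _ _)

lemma dI_comm (I : Finset (Fin d)) (x y : HPt d) : dI I x y = dI I y x := by
  unfold dI
  congr 1
  exact Finset.sum_congr rfl fun e _ => coordSq_comm _ _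

lemma sq_single_le {u c : HPt d} {a b : Fin d}
    (h : dI {a} u c ≤ dI {b} u c) :
    coordSq (u a) (c a) ≤ coordSq (u b) (c b) := by
  have ha := coordSq_nonneg (u a) (c a)
  have hb := coordSq_nonneg (u b) (c b)
  simp only [dI, Finset.sum_singleton] at h
  calc coordSq (u a) (c a) = Real.sqrt (coordSq (u a) (c a)) ^ 2 :=
        (Real.sq_sqrt ha).symm
    _ ≤ Real.sqrt (coordSq (u b) (c b)) ^ 2 :=
        pow_le_pow_left₀ (Real.sqrt_nonneg _) h 2
    _ = coordSq (u b) (c b) := Real.sq_sqrt hb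

lemma sqrt_sum_add_sq_le {ι : Type*} (s : Finset ι) (p q : ι → ℝ) :
    Real.sqrt (∑ e ∈ s, (p e + q e) ^ 2) ≤
      Real.sqrt (∑ e ∈ s, p e ^ 2) + Real.sqrt (∑ e ∈ s, q e ^ 2) := by
  have hp : (0:ℝ) ≤ ∑ e ∈ s, p e ^ 2 := Finset.sum_nonneg fun _ _ => sq_nonneg _
  have hq : (0:ℝ) ≤ ∑ e ∈ s, q e ^ 2 := Finset.sum_nonneg fun _ _ => sq_nonneg _
  have hpq : ∑ e ∈ s, p e * q e ≤
      Real.sqrt (∑ e ∈ s, p e ^ 2) * Real.sqrt (∑ e ∈ s, q e ^ 2) := by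
    calc ∑ e ∈ s, p e * q e ≤ |∑ e ∈ s, p e * q e| := le_abs_self _
      _ = Real.sqrt ((∑ e ∈ s, p e * q e) ^ 2) := (Real.sqrt_sq_eq_abs _).symm
      _ ≤ Real.sqrt ((∑ e ∈ s, p e ^ 2) * ∑ e ∈ s, q e ^ 2) :=
          Real.sqrt_le_sqrt (Finset.sum_mul_sq_le_sq_mul_sq s p q)
      _ = _ := Real.sqrt_mul hp _
  have e1 : ∑ e ∈ s, (p e + q e) ^ 2 =
      ∑ e ∈ s, p e ^ 2 + 2 * ∑ e ∈ s, p e * q e + ∑ e ∈ s, q e ^ 2 := by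
    rw [Finset.mul_sum, ← Finset.sum_add_distrib, ← Finset.sum_add_distrib]
    exact Finset.sum_congr rfl fun e _ => by ring
  have key : ∑ e ∈ s, (p e + q e) ^ 2 ≤
      (Real.sqrt (∑ e ∈ s, p e ^ 2) + Real.sqrt (∑ e ∈ s, q e ^ 2)) ^ 2 := by
    have h1 := Real.sq_sqrt hp
    have h2 := Real.sq_sqrt hq
    nlinarith [hpq, e1]
  calc Real.sqrt (∑ e ∈ s, (p e + q e) ^ 2)
      ≤ Real.sqrt ((Real.sqrt (∑ e ∈ s, p e ^ 2) +
          Real.sqrt (∑ e ∈ s, q e ^ 2)) ^ 2) := Real.sqrt_le_sqrt key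
    _ = _ := Real.sqrt_sq (by positivity)

lemma dI_triangle {S : Finset (Fin d)} {u x c : HPt d}
    (hS : ∀ e ∈ S, x e ≠ none) :
    dI S u c ≤ dI S u x + dI S x c := by
  classical
  set p : Fin d → ℝ := fun e => Real.sqrt (coordSq (u e) (x e)) with hpdef
  set q : Fin d → ℝ := fun e => Real.sqrt (coordSq (x e) (c e)) with hqdef
  have h1 : ∀ e ∈ S, coordSq (u e) (c e) ≤ (p e + q e) ^ 2 := by
    intro e he
    obtain ⟨t, hx⟩ : ∃ t, x e = some t := by
      cases hxe : x e with
      | none => exact absurd hxe (hS e he)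
      | some t => exact ⟨t, rfl⟩
    have hpnn : 0 ≤ p e := Real.sqrt_nonneg _
    have hqnn : 0 ≤ q e := Real.sqrt_nonneg _
    cases hu : u e with
    | none => simp only [coordSq, hu]; positivity
    | some a =>
      cases hc : c e with
      | none => simp only [coordSq, hu, hc]; positivity
      | some b =>
        simp only [hpdef, hqdef, hx, hu, hc, coordSq]
        rw [Real.sqrt_sq_eq_abs, Real.sqrt_sq_eq_abs]
        calc (a - b) ^ 2 = |a - b| ^ 2 := (sq_abs _).symm
          _ ≤ (|a - t| + |t - b|) ^ 2 :=
              pow_le_pow_left₀ (abs_nonneg _) (abs_sub_le a t b) 2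
  have h2 : dI S u c ≤ Real.sqrt (∑ e ∈ S, (p e + q e) ^ 2) :=
    Real.sqrt_le_sqrt (Finset.sum_le_sum h1)
  have h3 := sqrt_sum_add_sq_le S p q
  have hps : ∑ e ∈ S, p e ^ 2 = ∑ e ∈ S, coordSq (u e) (x e) :=
    Finset.sum_congr rfl fun e _ => Real.sq_sqrt (coordSq_nonneg _ _)
  have hqs : ∑ e ∈ S, q e ^ 2 = ∑ e ∈ S, coordSq (x e) (c e) :=
    Finset.sum_congr rfl fun e _ => Real.sq_sqrt (coordSq_nonneg _ _)
  rw [hps, hqs] at h3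
  exact h2.trans h3

/-- Claim 1 in Lemma 11: with a compatible set `Z_{i,j}`, points of
`P'_j` fully defined on `I_i` are far from `u_i`. -/
theorem stmt_12 {d Δ k : ℕ} (hd : 1 ≤ d) (hΔ : Δ < d) (hk : 1 ≤ k)
    {P : Finset (HPt d)} (hP : ∀ y ∈ P, IsDeltaPt Δ y ∧ (Dom y).Nonempty)
    (pc : PartialClustering d Δ k P)
    (Q : Fin k → Finset (HPt d)) (hQ : IsExtension pc Q)
    (i j : Fin k) (hIi : Δ + 1 ≤ (pc.I i).card) (hIj : pc.I j = ∅)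
    (Z : Finset (Fin d)) (hZsub : Z ⊆ pc.I i) (hZne : Z ≠ pc.I i)
    (hcompat : Compatible pc Q i j Z)
    (imin : Fin d) (himin : imin ∈ pc.I i \ Z)
    (hminProp : ∀ e ∈ pc.I i \ Z,
      dI {imin} (pc.u i) (centers pc Q j) ≤ dI {e} (pc.u i) (centers pc Q j))
    (Rs : Finset (Fin d)) (hRsub : Rs ⊆ pc.I i \ {imin}) (hRcard : Rs.card = Δ)
    (hRmax : ∀ r ∈ Rs, ∀ s ∈ (pc.I i \ {imin}) \ Rs,
      dI {s} (pc.u i) (centers pc Q j) ≤ dI {r} (pc.u i) (centers pc Q j))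
    (dj : ℝ) (hdj : dj = dI (pc.I i \ Rs) (pc.u i) (centers pc Q j)) (hpos : 0 < dj) :
    ∀ x ∈ Q j, Dom x ⊆ pc.I i → dj / 4 < dH x (pc.u i) := by
  classical
  intro x hxQ hdom
  set g : Fin d → ℝ := fun e => coordSq (pc.u i e) (centers pc Q j e) with hg
  have hgnn : ∀ e, 0 ≤ g e := fun e => coordSq_nonneg _ _
  have hxP : x ∈ P := hQ.2.1 j hxQ
  have hDelta : numMissing x ≤ Δ := (hP x hxP).1
  have hDomne : (Dom x).Nonempty := (hP x hxP).2
  have hxnone : ∀ e : Fin d, e ∉ Dom x ↔ x e = none := by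
    intro e; simp [Dom]
  -- an element of Dom x outside Z
  have hnsub : ¬ Dom x ⊆ Z := by
    apply hcompat.1 x hxQ
    rw [hIj]
    intro hsub
    exact Finset.not_nonempty_empty (hDomne.mono hsub)
  obtain ⟨e0, he0x, he0Z⟩ := Finset.not_subset.mp hnsub
  have he0I : e0 ∈ pc.I i := hdom he0x
  -- distance comparisons as coordSq comparisons
  have hgle : ∀ a b : Fin d,
      dI {a} (pc.u i) (centers pc Q j) ≤ dI {b} (pc.u i) (centers pc Q j) →
      g a ≤ g b := fun a b h => sq_single_le h
  -- the sets M and B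
  set B := Rs ∩ Dom x with hB
  set M := (pc.I i \ Rs) \ Dom x with hM
  have hMI : ∀ e ∈ M, e ∈ pc.I i ∧ e ∉ Rs ∧ e ∉ Dom x := by
    intro e he
    rw [hM, Finset.mem_sdiff, Finset.mem_sdiff] at he
    exact ⟨he.1.1, he.1.2, he.2⟩
  -- cardinality bound
  have hMB : M.card ≤ B.card := by
    have hsub : M ∪ (Rs \ Dom x) ⊆ Finset.univ.filter (fun e => x e = none) := by
      intro e he
      rw [Finset.mem_union] at he
      rw [Finset.mem_filter]
      refine ⟨Finset.mem_univ _, ?_⟩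
      rcases he with he | he
      · exact (hxnone e).mp (hMI e he).2.2
      · exact (hxnone e).mp (Finset.mem_sdiff.mp he).2
    have hdisj : Disjoint M (Rs \ Dom x) := by
      rw [Finset.disjoint_left]
      intro e heM heR
      exact (hMI e heM).2.1 (Finset.mem_sdiff.mp heR).1
    have h1 : M.card + (Rs \ Dom x).card ≤ Δ := by
      calc M.card + (Rs \ Dom x).card = (M ∪ (Rs \ Dom x)).card :=
            (Finset.card_union_of_disjoint hdisj).symm
        _ ≤ Δ := le_trans (Finset.card_le_card hsub) hDelta
    have h2 : B.card + (Rs \ Dom x).card = Δ := by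
      rw [hB, ← hRcard]
      exact Finset.card_inter_add_card_sdiff Rs (Dom x)
    omega
  have hsmall : ∀ e ∈ M, e ≠ imin → ∀ b ∈ Rs, g e ≤ g b := by
    intro e heM hne b hb
    apply hgle
    apply hRmax b hb
    rw [Finset.mem_sdiff, Finset.mem_sdiff, Finset.mem_singleton]
    exact ⟨⟨(hMI e heM).1, hne⟩, (hMI e heM).2.1⟩
  have himine0 : g imin ≤ g e0 := by
    apply hgle
    apply hminProp
    rw [Finset.mem_sdiff]
    exact ⟨he0I, he0Z⟩
  have nsmul_mono : ∀ (n m : ℕ) (r : ℝ), n ≤ m → 0 ≤ r → n • r ≤ m • r := by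
    intro n m r h hr
    simp only [nsmul_eq_mul]
    exact mul_le_mul_of_nonneg_right (by exact_mod_cast h) hr
  -- key combinatorial bound
  have hkey : ∑ e ∈ M, g e ≤ ∑ e ∈ B, g e := by
    rcases Finset.eq_empty_or_nonempty M with hMe | hMne
    · rw [hMe, Finset.sum_empty]
      exact Finset.sum_nonneg fun e _ => hgnn e
    · have hBne : B.Nonempty := Finset.card_pos.mp
        (lt_of_lt_of_le (Finset.card_pos.mpr hMne) hMB)
      obtain ⟨bmin, hbminB, hbmin⟩ := Finset.exists_min_image B g hBne
      have hbminRs : bmin ∈ Rs := (Finset.mem_inter.mp hbminB).1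
      by_cases himinM : imin ∈ M
      · obtain ⟨bmax, hbmaxB, hbmax⟩ := Finset.exists_max_image B g hBne
        have hbmaxRs : bmax ∈ Rs := (Finset.mem_inter.mp hbmaxB).1
        have h1 : ∑ e ∈ M.erase imin, g e ≤ (M.erase imin).card • g bmin :=
          Finset.sum_le_card_nsmul _ _ _ (fun e he =>
            hsmall e (Finset.mem_of_mem_erase he) (Finset.ne_of_mem_erase he)
              bmin hbminRs)
        have h2 : (B.erase bmax).card • g bmin ≤ ∑ e ∈ B.erase bmax, g e :=
          Finset.card_nsmul_le_sum _ _ _ (fun e he =>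
            hbmin e (Finset.mem_of_mem_erase he))
        have hcards : (M.erase imin).card ≤ (B.erase bmax).card := by
          rw [Finset.card_erase_of_mem himinM, Finset.card_erase_of_mem hbmaxB]
          omega
        have himin_max : g imin ≤ g bmax := by
          by_cases he0B : e0 ∈ B
          · exact himine0.trans (hbmax e0 he0B)
          · have he0Rs : e0 ∉ Rs := fun h => he0B (Finset.mem_inter.mpr ⟨h, he0x⟩)
            have he0imin : e0 ≠ imin := by
              intro h
              exact (hMI imin himinM).2.2 (h ▸ he0x)
            have : g e0 ≤ g bmax := by
              apply hgle
              apply hRmax bmax hbmaxRs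
              rw [Finset.mem_sdiff, Finset.mem_sdiff, Finset.mem_singleton]
              exact ⟨⟨he0I, he0imin⟩, he0Rs⟩
            exact himine0.trans this
        calc ∑ e ∈ M, g e = ∑ e ∈ M.erase imin, g e + g imin :=
              (Finset.sum_erase_add M g himinM).symm
          _ ≤ (M.erase imin).card • g bmin + g bmax := add_le_add h1 himin_max
          _ ≤ (B.erase bmax).card • g bmin + g bmax :=
              add_le_add_left (nsmul_mono _ _ _ hcards (hgnn _)) _
          _ ≤ ∑ e ∈ B.erase bmax, g e + g bmax := add_le_add_left h2 _
          _ = ∑ e ∈ B, g e := Finset.sum_erase_add B g hbmaxB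
      · have h1 : ∑ e ∈ M, g e ≤ M.card • g bmin :=
          Finset.sum_le_card_nsmul _ _ _ (fun e he =>
            hsmall e he (fun h => himinM (h ▸ he)) bmin hbminRs)
        have h2 : B.card • g bmin ≤ ∑ e ∈ B, g e :=
          Finset.card_nsmul_le_sum _ _ _ (fun e he => hbmin e he)
        exact h1.trans ((nsmul_mono _ _ _ hMB (hgnn _)).trans h2)
  -- sum over I_i \ Rs is at most sum over Dom x
  have hsum : ∑ e ∈ pc.I i \ Rs, g e ≤ ∑ e ∈ Dom x, g e := by
    have hsplit : ∑ e ∈ pc.I i \ Rs, g e =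
        ∑ e ∈ (pc.I i \ Rs) ∩ Dom x, g e + ∑ e ∈ M, g e := by
      rw [hM]
      exact (Finset.sum_inter_add_sum_sdiff _ _ _).symm
    have hdisj2 : Disjoint ((pc.I i \ Rs) ∩ Dom x) B := by
      rw [Finset.disjoint_left]
      intro e he heB
      exact (Finset.mem_sdiff.mp (Finset.mem_inter.mp he).1).2
        (Finset.mem_inter.mp heB).1
    have hunion : ((pc.I i \ Rs) ∩ Dom x) ∪ B ⊆ Dom x := by
      intro e he
      rcases Finset.mem_union.mp he with he | he
      · exact (Finset.mem_inter.mp he).2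
      · exact (Finset.mem_inter.mp he).2
    have hsplit2 : ∑ e ∈ ((pc.I i \ Rs) ∩ Dom x) ∪ B, g e ≤ ∑ e ∈ Dom x, g e :=
      Finset.sum_le_sum_of_subset_of_nonneg hunion fun e _ _ => hgnn e
    rw [Finset.sum_union hdisj2] at hsplit2
    linarith
  -- pass to distances
  have h1 : dj ≤ dI (Dom x) (pc.u i) (centers pc Q j) := by
    rw [hdj]
    apply Real.sqrt_le_sqrt
    simpa only [hg] using hsum
  have h2 : dI (Dom x) (pc.u i) (centers pc Q j) ≤
      dI (Dom x) (pc.u i) x + dI (Dom x) x (centers pc Q j) := by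
    apply dI_triangle
    intro e he
    intro hnone
    exact ((hxnone e).mpr hnone) he
  have h3 : dI (Dom x) (pc.u i) x ≤ dH x (pc.u i) := by
    rw [dI_comm]
    exact dI_mono (Finset.subset_univ _) _ _
  have h4 : dI (Dom x) x (centers pc Q j) ≤ dH x (centers pc Q j) :=
    dI_mono (Finset.subset_univ _) _ _
  have hc2 : dH x (centers pc Q j) / 2 ≤ dH x (pc.u i) :=
    not_lt.mp (hcompat.2 x hxQ hdom)
  linarith

end KMD
end

section
/- Let Δ ≥ 1, let S be a finite nonempty set of Δ-points in ℍ^d, and let δ = 1/(2Δ). Then there exist a set L ⊆ [d] with |L| ≤ Δ and a subset F ⊆ S with |F| ≥ (1 − δ)^Δ·|S| ≥ |S|/2 such that every x ∈ F satisfies x_i = ? for every i ∈ L, and for every coordinate i ∈ [d] − L the number of points x ∈ F with x_i = ? is at most (1 − δ)·|F|. -/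
open Finset

namespace KMD

variable {d : ℕ}

variable {Δ k : ℕ} {P : Finset (HPt d)}

open scoped Classical in
theorem stmt_19_aux {d : ℕ} (Δ : ℕ) (S : Finset (HPt d))
    (hSΔ : ∀ x ∈ S, IsDeltaPt Δ x)
    (δ : ℝ) (hδ0 : 0 ≤ δ) (hδ1 : δ ≤ 1 / 2) :
    ∀ n : ℕ, ∀ (L : Finset (Fin d)) (F : Finset (HPt d)),
      Δ ≤ L.card + n → F ⊆ S → F.Nonempty → L.card ≤ Δ →
      (∀ x ∈ F, ∀ i ∈ L, x i = none) →
      (1 - δ) ^ L.card * (S.card : ℝ) ≤ (F.card : ℝ) →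
      ∃ (L' : Finset (Fin d)) (F' : Finset (HPt d)),
        L'.card ≤ Δ ∧ F' ⊆ S ∧
        (1 - δ) ^ Δ * (S.card : ℝ) ≤ (F'.card : ℝ) ∧
        (∀ x ∈ F', ∀ i ∈ L', x i = none) ∧
        ∀ i ∈ Finset.univ \ L',
          ((F'.filter fun x => x i = none).card : ℝ) ≤ (1 - δ) * (F'.card : ℝ) := by
  have h1δ : 0 ≤ 1 - δ := by linarith
  intro n
  induction n with
  | zero =>
    intro L F hn hFS hFne hLΔ hmiss hcard
    refine ⟨L, F, hLΔ, hFS, ?_, hmiss, ?_⟩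
    · calc (1 - δ) ^ Δ * (S.card : ℝ) ≤ (1 - δ) ^ L.card * (S.card : ℝ) := by
            apply mul_le_mul_of_nonneg_right _ (by positivity)
            exact pow_le_pow_of_le_one h1δ (by linarith) hLΔ
        _ ≤ (F.card : ℝ) := hcard
    · intro i hi
      simp only [Finset.mem_sdiff, Finset.mem_univ, true_and] at hi
      have hzero : (F.filter fun x => x i = none) = ∅ := by
        rw [Finset.filter_eq_empty_iff]
        intro x hxF hxi
        have hsub : insert i L ⊆ Finset.univ.filter fun j => x j = none := by
          intro j hj
          rcases Finset.mem_insert.mp hj with rfl | hj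
          · simp [hxi]
          · simp [hmiss x hxF j hj]
        have hc : (insert i L).card ≤ numMissing x :=
          Finset.card_le_card hsub
        rw [Finset.card_insert_of_notMem hi] at hc
        have hx := hSΔ x (hFS hxF)
        unfold IsDeltaPt at hx
        omega
      rw [hzero]
      simp only [Finset.card_empty, Nat.cast_zero]
      positivity
  | succ m ih =>
    intro L F hn hFS hFne hLΔ hmiss hcard
    by_cases hall : ∀ i ∈ Finset.univ \ L,
        ((F.filter fun x => x i = none).card : ℝ) ≤ (1 - δ) * (F.card : ℝ)
    · refine ⟨L, F, hLΔ, hFS, ?_, hmiss, hall⟩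
      calc (1 - δ) ^ Δ * (S.card : ℝ) ≤ (1 - δ) ^ L.card * (S.card : ℝ) := by
            apply mul_le_mul_of_nonneg_right _ (by positivity)
            exact pow_le_pow_of_le_one h1δ (by linarith) hLΔ
        _ ≤ (F.card : ℝ) := hcard
    · push_neg at hall
      obtain ⟨i, hi, hbig⟩ := hall
      simp only [Finset.mem_sdiff, Finset.mem_univ, true_and] at hi
      set F' := F.filter fun x => x i = none with hF'
      set L' := insert i L with hL'
      have hF'S : F' ⊆ S := (Finset.filter_subset _ _).trans hFS
      have hF'ne : F'.Nonempty := by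
        rw [← Finset.card_pos]
        by_contra h
        push_neg at h
        interval_cases h' : F'.card
        · have : (0:ℝ) ≤ (1 - δ) * (F.card : ℝ) := by positivity
          push_cast at hbig
          linarith
      have hmiss' : ∀ x ∈ F', ∀ j ∈ L', x j = none := by
        intro x hx j hj
        rcases Finset.mem_insert.mp hj with rfl | hj
        · exact (Finset.mem_filter.mp hx).2
        · exact hmiss x (Finset.mem_filter.mp hx).1 j hj
      have hL'card : L'.card = L.card + 1 := Finset.card_insert_of_notMem hi
      have hL'Δ : L'.card ≤ Δ := by
        obtain ⟨x, hx⟩ := hF'ne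
        have hsub : L' ⊆ Finset.univ.filter fun j => x j = none := by
          intro j hj
          simp [hmiss' x hx j hj]
        have hc : L'.card ≤ numMissing x := Finset.card_le_card hsub
        exact hc.trans (hSΔ x (hF'S hx))
      have hcard' : (1 - δ) ^ L'.card * (S.card : ℝ) ≤ (F'.card : ℝ) := by
        rw [hL'card, pow_succ]
        calc (1 - δ) ^ L.card * (1 - δ) * (S.card : ℝ)
            = (1 - δ) * ((1 - δ) ^ L.card * (S.card : ℝ)) := by ring
          _ ≤ (1 - δ) * (F.card : ℝ) := mul_le_mul_of_nonneg_left hcard h1δ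
          _ ≤ (F'.card : ℝ) := le_of_lt hbig
      exact ih L' F' (by omega) hF'S hF'ne hL'Δ hmiss' hcard'

open scoped Classical in
/-- in any finite nonempty set `S` of `Δ`-points one can find at most
`Δ` "bad" coordinates `L` and a large subset `F` all of whose points are missing
exactly on `L`-coordinates and, on every other coordinate, at most a `(1−δ)`
fraction of `F` is missing, where `δ = 1/(2Δ)`. -/
theorem stmt_19 {d : ℕ} (Δ : ℕ) (hΔ : 1 ≤ Δ) (hΔd : Δ < d)
    (S : Finset (HPt d)) (hS : S.Nonempty) (hSΔ : ∀ x ∈ S, IsDeltaPt Δ x)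
    (δ : ℝ) (hδ : δ = 1 / (2 * Δ)) :
    ∃ (L : Finset (Fin d)) (F : Finset (HPt d)),
      L.card ≤ Δ ∧ F ⊆ S ∧
      (1 - δ) ^ Δ * (S.card : ℝ) ≤ (F.card : ℝ) ∧
      (S.card : ℝ) / 2 ≤ (1 - δ) ^ Δ * (S.card : ℝ) ∧
      (∀ x ∈ F, ∀ i ∈ L, x i = none) ∧
      ∀ i ∈ Finset.univ \ L,
        ((F.filter fun x => x i = none).card : ℝ) ≤ (1 - δ) * (F.card : ℝ) := by
  have hΔR : (1 : ℝ) ≤ (Δ : ℝ) := by exact_mod_cast hΔ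
  have hδ0 : 0 ≤ δ := by rw [hδ]; positivity
  have hδ1 : δ ≤ 1 / 2 := by
    rw [hδ, div_le_div_iff₀ (by positivity) (by norm_num)]
    linarith
  have hδΔ : (Δ : ℝ) * δ = 1 / 2 := by
    rw [hδ]
    field_simp
  have hhalf : (1 : ℝ) / 2 ≤ (1 - δ) ^ Δ := by
    have := one_add_mul_le_pow (a := -δ) (by linarith) Δ
    have h2 : 1 + (Δ : ℝ) * (-δ) = 1 / 2 := by
      rw [mul_neg]; linarith
    calc (1:ℝ)/2 = 1 + (Δ : ℝ) * (-δ) := h2.symm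
      _ ≤ (1 + -δ) ^ Δ := this
      _ = (1 - δ) ^ Δ := by ring_nf
  obtain ⟨L, F, h1, h2, h3, h4, h5⟩ :=
    stmt_19_aux Δ S hSΔ δ hδ0 hδ1 Δ ∅ S (by simp) (le_refl _) hS (by simp)
      (by simp) (by simp)
  refine ⟨L, F, h1, h2, h3, ?_, h4, h5⟩
  calc (S.card : ℝ) / 2 = (1/2) * (S.card : ℝ) := by ring
    _ ≤ (1 - δ) ^ Δ * (S.card : ℝ) :=
        mul_le_mul_of_nonneg_right hhalf (by positivity)

end KMD
end
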